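/- arXiv:2006.02127 — 5 statements merged into one kernel-verified Lean document; each statement's English description precedes it below -/
import Mathlib

section
/- Let N > 0, 0 < γ* ≤ 1, 0 ≤ R_f < N, and β*, β₀ > 0. Suppose for every t with 0 ≤ R_t ≤ R_f we have (1 - R_t/(γ* N))β* = (1 - R_t/N)β₀(t) where β₀(t) > 0 is the fitted rate. Then with ε = R_f(1-γ*)/(γ*(N - R_f)), for all such t, 0 ≤ (β* - β₀(t))/β* ≤ ε. -/
theorem stmt_1 (N γstar Rf βstar : ℝ) (R β0 : ℕ → ℝ)
    (hN : 0 < N) (hγ0 : 0 < γstar) (hγ1 : γstar ≤ 1)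
    (hRf0 : 0 ≤ Rf) (hRfN : Rf < N) (hβstar : 0 < βstar)
    (hβ0pos : ∀ t, 0 ≤ R t → R t ≤ Rf → 0 < β0 t)
    (heq : ∀ t, 0 ≤ R t → R t ≤ Rf →
      (1 - R t / (γstar * N)) * βstar = (1 - R t / N) * β0 t) :
    ∀ t, 0 ≤ R t → R t ≤ Rf →
      0 ≤ (βstar - β0 t) / βstar ∧
      (βstar - β0 t) / βstar ≤ Rf * (1 - γstar) / (γstar * (N - Rf)) := by
  intro t h0 h1
  have hr := heq t h0 h1
  have hrN : R t < N := lt_of_le_of_lt h1 hRfN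
  have hNr : 0 < N - R t := by linarith
  have hNRf : 0 < N - Rf := by linarith
  have hr' : (γstar * N - R t) * βstar = γstar * (N - R t) * β0 t := by
    have hN' : N ≠ 0 := hN.ne'
    have hγ' : γstar ≠ 0 := hγ0.ne'
    field_simp at hr
    exact mul_left_cancel₀ hN' (by linear_combination N * hr)
  have key : (βstar - β0 t) / βstar = R t * (1 - γstar) / (γstar * (N - R t)) := by
    rw [div_eq_div_iff hβstar.ne' (by positivity)]
    linear_combination hr'
  rw [key]
  constructor
  · apply div_nonneg
    · exact mul_nonneg h0 (by linarith)
    · positivity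
  · rw [div_le_div_iff₀ (by positivity) (by positivity)]
    nlinarith [mul_nonneg (mul_nonneg hγ0.le (sub_nonneg.mpr hγ1))
      (mul_nonneg hN.le (sub_nonneg.mpr h1))]
end

section
/- Let N > 0, β₁ > β₂ > 0, 0 < γ̄₁ ≤ 1, R_t > 0 with R_t > γ̄₁N(1 - β₂/β₁), and define γ̄₂ = (β₂/β₁)γ̄₁R_t / (R_t - (1 - β₂/β₁)γ̄₁N). Then γ̄₂ ≤ 1 if and only if R_t ≥ γ̄₁N(1 - β₂/β₁)/(1 - (β₂/β₁)γ̄₁). -/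
theorem stmt_4 (N β1 β2 γ1 Rt : ℝ)
    (hN : 0 < N) (hβ2 : 0 < β2) (hβ12 : β2 < β1)
    (hγ0 : 0 < γ1) (hγ1 : γ1 ≤ 1) (hRt : 0 < Rt)
    (hpos : Rt > γ1 * N * (1 - β2 / β1)) :
    (β2 / β1) * γ1 * Rt / (Rt - (1 - β2 / β1) * γ1 * N) ≤ 1 ↔
      Rt ≥ γ1 * N * (1 - β2 / β1) / (1 - (β2 / β1) * γ1) := by
  have hβ1 : 0 < β1 := hβ2.trans hβ12
  have hr : β2 / β1 < 1 := (div_lt_one hβ1).mpr hβ12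
  have hr0 : 0 < β2 / β1 := div_pos hβ2 hβ1
  have hD : 0 < Rt - (1 - β2 / β1) * γ1 * N := by nlinarith
  have h1 : 0 < 1 - (β2 / β1) * γ1 := by nlinarith
  rw [div_le_one hD, ge_iff_le, div_le_iff₀ h1]
  constructor <;> intro h <;> nlinarith
end

section
/- Let N > 0, 0 < γ̄₁ ≤ 1, β₁ > β₂ > 0 with (β₂/β₁)γ̄₁ < 1. Define R_τ = γ̄₁N(1 - β₂/β₁)/(1 - (β₂/β₁)γ̄₁). Then for every R with R_τ < R < N, the value γ̄₂ = (β₂/β₁)γ̄₁R / (R - (1 - β₂/β₁)γ̄₁N) satisfies 0 < γ̄₂ ≤ 1 and (1 - R/(γ̄₁N))β₁ = (1 - R/(γ̄₂N))β₂. -/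
theorem stmt_5 (N β1 β2 γ1 : ℝ)
    (hN : 0 < N) (hβ2 : 0 < β2) (hβ12 : β2 < β1)
    (hγ0 : 0 < γ1) (hγ1 : γ1 ≤ 1) (hprod : (β2 / β1) * γ1 < 1) :
    ∀ R : ℝ, γ1 * N * (1 - β2 / β1) / (1 - (β2 / β1) * γ1) < R → R < N →
      0 < (β2 / β1) * γ1 * R / (R - (1 - β2 / β1) * γ1 * N) ∧
      (β2 / β1) * γ1 * R / (R - (1 - β2 / β1) * γ1 * N) ≤ 1 ∧
      (1 - R / (γ1 * N)) * β1 =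
        (1 - R / (((β2 / β1) * γ1 * R / (R - (1 - β2 / β1) * γ1 * N)) * N)) * β2 := by
  intro R hR hRN
  have hβ1 : 0 < β1 := lt_trans hβ2 hβ12
  have hc0 : 0 < β2 / β1 := div_pos hβ2 hβ1
  have hc1 : β2 / β1 < 1 := (div_lt_one hβ1).mpr hβ12
  have h1 : 0 < 1 - (β2 / β1) * γ1 := by linarith
  have hR' : γ1 * N * (1 - β2 / β1) < R * (1 - (β2 / β1) * γ1) :=
    (div_lt_iff₀ h1).mp hR
  have hRpos : 0 < R := lt_trans (div_pos (by nlinarith [mul_pos hγ0 hN]) h1) hR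
  have hD : (β2 / β1) * γ1 * R < R - (1 - β2 / β1) * γ1 * N := by nlinarith
  have hnum : 0 < (β2 / β1) * γ1 * R := by positivity
  have hDpos : 0 < R - (1 - β2 / β1) * γ1 * N := lt_trans hnum hD
  refine ⟨div_pos hnum hDpos, (div_le_one hDpos).mpr hD.le, ?_⟩
  have hγN : γ1 * N ≠ 0 := by positivity
  have hDne : R - (1 - β2 / β1) * γ1 * N ≠ 0 := ne_of_gt hDpos
  have hnumne : (β2 / β1) * γ1 * R ≠ 0 := ne_of_gt hnum
  field_simp
  ring
end

section
/- Let N > 0, 0 < ε < 1, β*, β₀ > 0 with β* ≥ β₀ ≥ (1-ε)β*, and 0 < γ* ≤ γ₀ ≤ 1, R_t > 0. Suppose γ₀ = γ*(β₀/β*)(R_t/N) / (R_t/N - (1 - β₀/β*)γ*). If for some 0 < δ < 1 we had γ* < (1-δ)γ₀, then R_t < Nεγ₀/δ. Consequently, if R_t ≥ Nεγ₀/δ then γ* ≥ (1-δ)γ₀. -/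
theorem stmt_6 (N ε βstar β0 γstar γ0 Rt : ℝ)
    (hN : 0 < N) (hε0 : 0 < ε) (hε1 : ε < 1)
    (hβstar : 0 < βstar) (hβ0 : 0 < β0)
    (hβle : β0 ≤ βstar) (hβge : (1 - ε) * βstar ≤ β0)
    (hγstar : 0 < γstar) (hγle : γstar ≤ γ0) (hγ1 : γ0 ≤ 1)
    (hRt : 0 < Rt)
    (hrel : γ0 = γstar * (β0 / βstar) * (Rt / N) /
      (Rt / N - (1 - β0 / βstar) * γstar)) :
    (∀ δ : ℝ, 0 < δ → δ < 1 → γstar < (1 - δ) * γ0 → Rt < N * ε * γ0 / δ) ∧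
    (∀ δ : ℝ, 0 < δ → δ < 1 → N * ε * γ0 / δ ≤ Rt → (1 - δ) * γ0 ≤ γstar) := by
  set b := β0 / βstar with hb
  have hb0 : 0 < b := div_pos hβ0 hβstar
  have hb1 : b ≤ 1 := by rw [hb, div_le_one hβstar]; exact hβle
  have hbε : 1 - ε ≤ b := by rw [hb, le_div_iff₀ hβstar]; nlinarith
  have hγ0 : 0 < γ0 := lt_of_lt_of_le hγstar hγle
  set r := Rt / N with hr
  have hr0 : 0 < r := div_pos hRt hN
  have hD : 0 < r - (1 - b) * γstar := by
    rcases lt_trichotomy (r - (1 - b) * γstar) 0 with h | h | h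
    · exfalso
      have hneg : γstar * b * r / (r - (1 - b) * γstar) < 0 :=
        div_neg_of_pos_of_neg (by positivity) h
      linarith [hrel ▸ hγ0]
    · exfalso
      have := hrel
      rw [h, div_zero] at this
      linarith
    · exact h
  have hkey : r * (γ0 - b * γstar) = γ0 * γstar * (1 - b) := by
    have h1 : γ0 * (r - (1 - b) * γstar) = γstar * b * r := by
      rw [hrel, div_mul_eq_mul_div, div_eq_iff hD.ne', mul_comm]
    nlinarith [h1]
  have hRN : r * N = Rt := div_mul_cancel₀ Rt hN.ne'
  have A : ∀ δ : ℝ, 0 < δ → δ < 1 → γstar < (1 - δ) * γ0 → Rt < N * ε * γ0 / δ := by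
    intro δ hδ0 hδ1 hlt
    have h1 : δ * γ0 < γ0 - b * γstar := by nlinarith
    have h2 : r * (δ * γ0) < ε * γ0 ^ 2 := by
      nlinarith [mul_lt_mul_of_pos_left h1 hr0,
        mul_nonneg (mul_nonneg hγ0.le (sub_nonneg.2 hγle)) (sub_nonneg.2 hb1),
        mul_nonneg (mul_pos hγ0 hγ0).le (by linarith : (0:ℝ) ≤ ε - (1 - b))]
    rw [lt_div_iff₀ hδ0]
    have h3 : (Rt * δ) * γ0 < (N * ε * γ0) * γ0 := by
      nlinarith [mul_lt_mul_of_pos_left h2 hN]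
    exact lt_of_mul_lt_mul_right h3 hγ0.le
  refine ⟨A, fun δ hδ0 hδ1 hge => ?_⟩
  by_contra h'
  push_neg at h'
  exact absurd hge (not_le.mpr (A δ hδ0 hδ1 h'))
end

section
/- Let N > 0 and 0 < γ ≤ 1, 0 ≤ ρ < 1. Suppose the actual epidemic satisfies ΔI_t = ((((1-ρ)N - I_t)/((1-ρ)N))·Σ_{i=1}^k βᵢ(I_{t-(i-1)J} - I_{t-iJ}) and reported cases satisfy R_t = γI_t for all t. Then with γ̄ = γ(1-ρ), the reported series satisfies ΔR_t = (1 - R_t/(γ̄N))·Σ_{i=1}^k βᵢ(R_{t-(i-1)J} - R_{t-iJ}). -/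
theorem stmt_17 (N ρ γ : ℝ) (k J : ℕ) (β : ℕ → ℝ) (I R : ℤ → ℝ)
    (hN : 0 < N) (hγ0 : 0 < γ) (hγ1 : γ ≤ 1) (hρ0 : 0 ≤ ρ) (hρ1 : ρ < 1)
    (hI : ∀ t : ℤ, I t - I (t - 1) =
      (((1 - ρ) * N - I t) / ((1 - ρ) * N)) *
        ∑ i ∈ Finset.range k, β i * (I (t - (i : ℤ) * (J : ℤ)) - I (t - ((i : ℤ) + 1) * (J : ℤ))))
    (hR : ∀ t : ℤ, R t = γ * I t) :
    ∀ t : ℤ, R t - R (t - 1) =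
      (1 - R t / ((γ * (1 - ρ)) * N)) *
        ∑ i ∈ Finset.range k, β i * (R (t - (i : ℤ) * (J : ℤ)) - R (t - ((i : ℤ) + 1) * (J : ℤ))) := by
  intro t
  have h1ρ : (0:ℝ) < 1 - ρ := by linarith
  have hρN : (1 - ρ) * N ≠ 0 := by positivity
  have hγ : γ ≠ 0 := ne_of_gt hγ0
  have hsum : ∑ i ∈ Finset.range k, β i * (R (t - (i : ℤ) * (J : ℤ)) - R (t - ((i : ℤ) + 1) * (J : ℤ)))
      = γ * ∑ i ∈ Finset.range k, β i * (I (t - (i : ℤ) * (J : ℤ)) - I (t - ((i : ℤ) + 1) * (J : ℤ))) := by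
    rw [Finset.mul_sum]
    refine Finset.sum_congr rfl fun i _ => ?_
    rw [hR, hR]; ring
  have hcoef : (1 - R t / ((γ * (1 - ρ)) * N)) = ((1 - ρ) * N - I t) / ((1 - ρ) * N) := by
    rw [hR, mul_assoc, mul_div_mul_left _ _ hγ, sub_div, div_self hρN]
  rw [hsum, hcoef, hR t, hR (t - 1)]
  rw [show γ * I t - γ * I (t - 1) = γ * (I t - I (t - 1)) by ring, hI t]
  ring
end
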